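/- Sufficient condition for the satisfaction axiom: suppose the score X with domain D satisfies min_{ω∈E} S(ω) ≤ X(p) ≤ max_{ω∈E} S(ω) for every nonempty subset E ⊆ Ω and every performance p ∈ D with p(E) = 1. Then for every s ∈ ℝ and all performances p₁, p₂ with p₁({ω : S(ω) ≤ s}) = 1 and p₂({ω : S(ω) ≥ s}) = 1, either p₁ ≲_X p₂, or (¬(p₁ ≲_X p₂) and ¬(p₂ ≲_X p₁)). -/
import Mathlib


/-- A performance on a finite sample space: nonnegative and summing to one. -/
def IsPerformance {Ω : Type*} [Fintype Ω] (p : Ω → ℝ) : Prop :=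
  (∀ ω, 0 ≤ p ω) ∧ ∑ ω, p ω = 1

/-- The relation induced by a score `X` with domain `D`. -/
def scoreRel {P : Type*} (D : Set P) (X : P → ℝ) (p₁ p₂ : P) : Prop :=
  p₁ = p₂ ∨ (p₁ ∈ D ∧ p₂ ∈ D ∧ X p₁ ≤ X p₂)

theorem stmt1 {Ω : Type*} [Fintype Ω] [Nonempty Ω] (S : Ω → ℝ)
    (D : Set (Ω → ℝ)) (hD : ∀ p ∈ D, IsPerformance p) (X : (Ω → ℝ) → ℝ)
    (hX : ∀ (E : Finset Ω) (hE : E.Nonempty) (p : Ω → ℝ), p ∈ D →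
      (∑ ω ∈ E, p ω) = 1 → E.inf' hE S ≤ X p ∧ X p ≤ E.sup' hE S)
    (s : ℝ) (p₁ p₂ : Ω → ℝ) (h₁ : IsPerformance p₁) (h₂ : IsPerformance p₂)
    (hp₁ : ∑ ω ∈ Finset.univ.filter (fun ω => S ω ≤ s), p₁ ω = 1)
    (hp₂ : ∑ ω ∈ Finset.univ.filter (fun ω => s ≤ S ω), p₂ ω = 1) :
    scoreRel D X p₁ p₂ ∨ (¬ scoreRel D X p₁ p₂ ∧ ¬ scoreRel D X p₂ p₁) := by
  by_cases heq : p₁ = p₂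
  · exact Or.inl (Or.inl heq)
  by_cases hd : p₁ ∈ D ∧ p₂ ∈ D
  · left
    right
    refine ⟨hd.1, hd.2, ?_⟩
    set E₁ := Finset.univ.filter (fun ω => S ω ≤ s) with hE₁def
    set E₂ := Finset.univ.filter (fun ω => s ≤ S ω) with hE₂def
    have hE₁ : E₁.Nonempty := by
      by_contra h
      rw [Finset.not_nonempty_iff_eq_empty] at h
      rw [h, Finset.sum_empty] at hp₁
      norm_num at hp₁
    have hE₂ : E₂.Nonempty := by
      by_contra h
      rw [Finset.not_nonempty_iff_eq_empty] at h
      rw [h, Finset.sum_empty] at hp₂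
      norm_num at hp₂
    have h1 := hX E₁ hE₁ p₁ hd.1 hp₁
    have h2 := hX E₂ hE₂ p₂ hd.2 hp₂
    have hs1 : E₁.sup' hE₁ S ≤ s := by
      apply Finset.sup'_le
      intro ω hω
      simpa [hE₁def] using hω
    have hs2 : s ≤ E₂.inf' hE₂ S := by
      apply Finset.le_inf'
      intro ω hω
      simpa [hE₂def] using hω
    linarith [h1.2, h2.1]
  · right
    constructor
    · rintro (h | ⟨a, b, _⟩)
      · exact heq h
      · exact hd ⟨a, b⟩
    · rintro (h | ⟨a, b, _⟩)
      · exact heq h.symm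
      · exact hd ⟨b, a⟩
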